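/- arXiv:1601.07856 — 2 statements merged into one kernel-verified Lean document; each statement's English description precedes it below -/
import Mathlib

section
/- Let H be a finite simple graph, n ≥ 5 odd, f : C_n → H a graph homomorphism, and let i be an integer with 1 ≤ i ≤ n−2 and f(i−1) = f(i+1). Define f' : ZMod (n−2) → V(H) by f'(j) = f(j) for 0 ≤ j ≤ i−1 and f'(j) = f(j+2) for i ≤ j ≤ n−3 (on integer representatives). Then f' is a graph homomorphism from C_{n−2} to H and σ₁(f') = σ₁(f) in 𝒢₁(H). -/
/-- The type of arcs of a simple graph: ordered pairs of adjacent vertices. -/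
abbrev Arc {V : Type} (H : SimpleGraph V) : Type := {p : V × V // H.Adj p.1 p.2}

/-- The relators `(a,b)(c,b)⁻¹(c,d)(a,d)⁻¹` over all 4-cycles `(a,b,c,d)` of `H`. -/
def relators1 {V : Type} (H : SimpleGraph V) : Set (FreeGroup (Arc H)) :=
  {r | ∃ (a b c d : V) (hab : H.Adj a b) (hcb : H.Adj c b) (hcd : H.Adj c d) (had : H.Adj a d),
    r = FreeGroup.of ⟨(a, b), hab⟩ * (FreeGroup.of ⟨(c, b), hcb⟩)⁻¹ *
        FreeGroup.of ⟨(c, d), hcd⟩ * (FreeGroup.of ⟨(a, d), had⟩)⁻¹}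

/-- The group `𝒢₁(H)`, presented by the arcs with the 4-cycle relators. -/
abbrev G1 {V : Type} (H : SimpleGraph V) := PresentedGroup (relators1 H)

/-- `f : ZMod n → V` is a homomorphism from the cycle `C_n` to `H`. -/
def IsCycleHom {V : Type} (H : SimpleGraph V) (n : ℕ) (f : ZMod n → V) : Prop :=
  ∀ i : ZMod n, H.Adj (f i) (f (i + 1))

/-- The signature `σ₁(f) = ∏_{i=0}^{n-1} (f(2i),f(2i+1))·(f(2i+2),f(2i+1))⁻¹ ∈ 𝒢₁(H)`,
the product being taken from left to right. -/
def sig1 {V : Type} (H : SimpleGraph V) (n : ℕ) (f : ZMod n → V) (hf : IsCycleHom H n f) :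
    G1 H :=
  ((List.range n).map (fun k =>
    PresentedGroup.of (rels := relators1 H)
        ⟨(f (2 * (k : ZMod n)), f (2 * (k : ZMod n) + 1)), hf _⟩ *
    (PresentedGroup.of (rels := relators1 H)
        ⟨(f (2 * (k : ZMod n) + 1 + 1), f (2 * (k : ZMod n) + 1)), (hf _).symm⟩)⁻¹)).prod

/-- The cycle graph on `ZMod n` (`i` adjacent to `i ± 1`). -/
def cyc (n : ℕ) : SimpleGraph (ZMod n) := SimpleGraph.fromRel (fun i j => j = i + 1)

/-- Adjacency for the generalized Mycielskian. -/
def mycAdj {W : Type} (G : SimpleGraph W) (q : ℕ) :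
    (W × Fin q) ⊕ Unit → (W × Fin q) ⊕ Unit → Prop
  | Sum.inl (u, i), Sum.inl (v, j) =>
      G.Adj u v ∧ ((i : ℕ) + 1 = (j : ℕ) ∨ (j : ℕ) + 1 = (i : ℕ) ∨ ((i : ℕ) = 0 ∧ (j : ℕ) = 0))
  | Sum.inl (u, i), Sum.inr _ => (i : ℕ) = q - 1 ∧ ∃ v, G.Adj u v
  | Sum.inr _, Sum.inl (u, i) => (i : ℕ) = q - 1 ∧ ∃ v, G.Adj u v
  | Sum.inr _, Sum.inr _ => False

/-- The generalized Mycielskian `M_q(G)`: levels `0,…,q-1` of `G` plus an apex `*`. -/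
def Myc {W : Type} (G : SimpleGraph W) (q : ℕ) : SimpleGraph ((W × Fin q) ⊕ Unit) where
  Adj := mycAdj G q
  symm := by
    constructor
    rintro (⟨u, i⟩ | ⟨⟩) (⟨v, j⟩ | ⟨⟩) h <;> simp only [mycAdj] at h ⊢
    · exact ⟨h.1.symm, by tauto⟩
    · exact h
    · exact h
  loopless := by
    constructor
    rintro (⟨u, i⟩ | ⟨⟩) h <;> simp only [mycAdj] at h
    exact G.loopless.irrefl u h.1

section Helpers

variable {V : Type} (H : SimpleGraph V)

abbrev myArc (u v : V) (h : H.Adj u v) : G1 H := PresentedGroup.of (rels := relators1 H) ⟨(u, v), h⟩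

lemma myArc_congr {u v u' v' : V} (hu : u = u') (hv : v = v') (h : H.Adj u v) (h' : H.Adj u' v') :
    myArc H u v h = myArc H u' v' h' := by subst hu; subst hv; rfl

def step (a : ℕ → V) (ha : ∀ m, H.Adj (a m) (a (m + 1))) (m : ℕ) : G1 H :=
  if Even m then myArc H (a m) (a (m + 1)) (ha m) else (myArc H (a (m + 1)) (a m) (ha m).symm)⁻¹

lemma step_congr (a b : ℕ → V) (ha : ∀ m, H.Adj (a m) (a (m + 1)))
    (hb : ∀ m, H.Adj (b m) (b (m + 1))) (m m' : ℕ)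
    (h1 : a m = b m') (h2 : a (m + 1) = b (m' + 1)) (hpar : Even m ↔ Even m') :
    step H a ha m = step H b hb m' := by
  unfold step
  by_cases hm : Even m
  · rw [if_pos hm, if_pos (hpar.1 hm)]; exact myArc_congr H h1 h2 _ _
  · rw [if_neg hm, if_neg (fun h => hm (hpar.2 h))]
    exact congrArg Inv.inv (myArc_congr H h2 h1 _ _)

lemma step_cancel (a : ℕ → V) (ha : ∀ m, H.Adj (a m) (a (m + 1))) (m : ℕ)
    (hsp : a (m + 2) = a m) :
    step H a ha m * step H a ha (m + 1) = 1 := by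
  unfold step
  by_cases hm : Even m
  · rw [if_pos hm, if_neg (by simp [Nat.even_add_one, hm])]
    rw [show myArc H (a (m + 1 + 1)) (a (m + 1)) (ha (m + 1)).symm
        = myArc H (a m) (a (m + 1)) (ha m) from myArc_congr H hsp rfl _ _]
    exact mul_inv_cancel _
  · rw [if_neg hm, if_pos (by simp [Nat.even_add_one, hm])]
    rw [show myArc H (a (m + 1)) (a (m + 1 + 1)) (ha (m + 1))
        = myArc H (a (m + 1)) (a m) (ha m).symm from myArc_congr H rfl hsp _ _]
    exact inv_mul_cancel _

lemma prod_range_two_mul {G : Type*} [Monoid G] (t : ℕ → G) (n : ℕ) :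
    ((List.range (2 * n)).map t).prod
      = ((List.range n).map (fun k => t (2 * k) * t (2 * k + 1))).prod := by
  induction n with
  | zero => simp
  | succ n ih =>
    rw [show 2 * (n + 1) = 2 * n + 1 + 1 by ring, List.range_succ, List.range_succ,
      List.range_succ]
    simp only [List.map_append, List.prod_append, ih, List.map_cons, List.map_nil,
      List.prod_cons, List.prod_nil]
    group

lemma prod_range_add' {G : Type*} [Monoid G] (t : ℕ → G) (a b : ℕ) :
    ((List.range (a + b)).map t).prod
      = ((List.range a).map t).prod * ((List.range b).map (fun k => t (a + k))).prod := by
  rw [List.range_add]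
  simp [Function.comp_def]

lemma adj_nat {n : ℕ} (f : ZMod n → V) (hf : IsCycleHom H n f) (m : ℕ) :
    H.Adj (f (m : ZMod n)) (f ((m + 1 : ℕ) : ZMod n)) := by
  have e : ((m + 1 : ℕ) : ZMod n) = (m : ZMod n) + 1 := by push_cast; ring
  rw [e]; exact hf _

lemma sig1_eq_steps {n : ℕ} (f : ZMod n → V) (hf : IsCycleHom H n f) :
    sig1 H n f hf
      = ((List.range (2 * n)).map
          (step H (fun m => f (m : ZMod n)) (adj_nat H f hf))).prod := by
  rw [prod_range_two_mul]
  unfold sig1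
  apply congrArg List.prod
  rw [show (do let a ← List.range n; pure ((a : ZMod n))) = (List.range n).map (fun a : ℕ => (a : ZMod n)) by simp [List.bind_eq_flatMap, List.flatMap_singleton', Function.comp_def, List.map_eq_flatMap]]
  rw [List.map_map]
  apply List.map_congr_left
  intro k _
  have e1 : ((2 * k : ℕ) : ZMod n) = 2 * (k : ZMod n) := by push_cast; ring
  have e2 : ((2 * k + 1 : ℕ) : ZMod n) = 2 * (k : ZMod n) + 1 := by push_cast; ring
  have e3 : ((2 * k + 1 + 1 : ℕ) : ZMod n) = 2 * (k : ZMod n) + 1 + 1 := by push_cast; ring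
  rw [show step H (fun m => f (m : ZMod n)) (adj_nat H f hf) (2 * k)
      = myArc H (f ((2 * k : ℕ) : ZMod n)) (f ((2 * k + 1 : ℕ) : ZMod n)) (adj_nat H f hf (2 * k))
      from if_pos (even_two_mul k)]
  rw [show step H (fun m => f (m : ZMod n)) (adj_nat H f hf) (2 * k + 1)
      = (myArc H (f ((2 * k + 1 + 1 : ℕ) : ZMod n)) (f ((2 * k + 1 : ℕ) : ZMod n))
          (adj_nat H f hf (2 * k + 1)).symm)⁻¹
      from if_neg (by simp [Nat.even_add_one])]
  exact congrArg₂ (· * ·)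
    (myArc_congr H (congrArg f e1.symm) (congrArg f e2.symm) _ _)
    (congrArg Inv.inv (myArc_congr H (congrArg f e3.symm) (congrArg f e2.symm) _ _))

end Helpers

/-- Contracting a "spur" of an odd cycle (a vertex `i` with
`f(i-1) = f(i+1)`) yields a homomorphism `f' : C_{n-2} → H` with the same signature. -/
theorem sig1_spur_contraction {V : Type} [Fintype V] (H : SimpleGraph V)
    (n : ℕ) (hodd : Odd n) (h5 : 5 ≤ n)
    (f : ZMod n → V) (hf : IsCycleHom H n f)
    (i : ℕ) (hi1 : 1 ≤ i) (hi2 : i ≤ n - 2)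
    (hspur : f ((i - 1 : ℕ) : ZMod n) = f ((i + 1 : ℕ) : ZMod n))
    (f' : ZMod (n - 2) → V)
    (hf'def : ∀ j : ZMod (n - 2),
      (j.val ≤ i - 1 → f' j = f ((j.val : ℕ) : ZMod n)) ∧
      (i ≤ j.val → f' j = f ((j.val + 2 : ℕ) : ZMod n))) :
    ∃ hf' : IsCycleHom H (n - 2) f', sig1 H (n - 2) f' hf' = sig1 H n f hf := by
  obtain ⟨i', rfl⟩ : ∃ i', i = i' + 1 := ⟨i - 1, by omega⟩
  obtain ⟨N, rfl⟩ : ∃ N, n = N + 2 := ⟨n - 2, by omega⟩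
  have hiN : i' + 1 ≤ N := by omega
  have hN3 : 3 ≤ N := by omega
  haveI : NeZero N := ⟨by omega⟩
  have hspur' : f ((i' : ℕ) : ZMod (N + 2)) = f ((i' + 2 : ℕ) : ZMod (N + 2)) := by
    have e1 : i' + 1 - 1 = i' := by omega
    have e2 : i' + 1 + 1 = i' + 2 := by omega
    rw [e1, e2] at hspur; exact hspur
  simp only [Nat.add_sub_cancel] at hf'def
  show ∃ hf' : IsCycleHom H N f', sig1 H N f' hf' = sig1 H (N + 2) f hf
  -- periodicity
  have hper : ∀ m : ℕ, f (((m + (N + 2)) : ℕ) : ZMod (N + 2)) = f ((m : ℕ) : ZMod (N + 2)) := by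
    intro m
    congr 1
    rw [Nat.cast_add, ZMod.natCast_self, add_zero]
  have hglow : ∀ m : ℕ, m % N ≤ i' →
      f' ((m : ℕ) : ZMod N) = f (((m % N : ℕ)) : ZMod (N + 2)) := by
    intro m hm
    have h1 := (hf'def ((m : ZMod N))).1 (by rw [ZMod.val_natCast]; exact hm)
    rw [h1, ZMod.val_natCast]
    rfl
  have hghigh : ∀ m : ℕ, i' + 1 ≤ m % N →
      f' ((m : ℕ) : ZMod N) = f (((m % N + 2 : ℕ)) : ZMod (N + 2)) := by
    intro m hm
    have h1 := (hf'def ((m : ZMod N))).2 (by rw [ZMod.val_natCast]; exact hm)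
    rw [h1, ZMod.val_natCast]
    rfl
  have hA : ∀ m : ℕ, m ≤ i' → f' ((m : ℕ) : ZMod N) = f ((m : ℕ) : ZMod (N + 2)) := by
    intro m hm
    have h1 : m % N = m := Nat.mod_eq_of_lt (by omega)
    rw [hglow m (by rw [h1]; exact hm), h1]
  have hB : ∀ m : ℕ, i' ≤ m → m ≤ N + i' →
      f' ((m : ℕ) : ZMod N) = f ((m + 2 : ℕ) : ZMod (N + 2)) := by
    intro m hm1 hm2
    rcases Nat.lt_or_ge m N with hmN | hmN
    · have h1 : m % N = m := Nat.mod_eq_of_lt hmN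
      rcases Nat.lt_or_ge m (i' + 1) with h' | h'
      · rw [show m = i' from by omega]
        exact (hA i' le_rfl).trans hspur'
      · rw [hghigh m (by rw [h1]; omega), h1]
    · have h1 : m % N = m - N := by
        rw [Nat.mod_eq_sub_mod (by omega)]; exact Nat.mod_eq_of_lt (by omega)
      rw [hglow m (by rw [h1]; omega), h1]
      have e := hper (m - N)
      rw [show m - N + (N + 2) = m + 2 from by omega] at e
      exact e.symm
  have hC : ∀ m : ℕ, N + i' ≤ m → m ≤ 2 * N →
      f' ((m : ℕ) : ZMod N) = f ((m + 4 : ℕ) : ZMod (N + 2)) := by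
    intro m hm1 hm2
    rcases Nat.lt_or_ge m (2 * N) with hlt | hge
    · rcases Nat.lt_or_ge m (N + i' + 1) with h' | h'
      · have hm : m = N + i' := by omega
        subst hm
        rw [hB (N + i') (by omega) (by omega)]
        have e1 := hper i'
        rw [show i' + (N + 2) = N + i' + 2 from by omega] at e1
        have e2 := hper (i' + 2)
        rw [show i' + 2 + (N + 2) = N + i' + 4 from by omega] at e2
        rw [e1, e2]
        exact hspur'
      · have h1 : m % N = m - N := by
          rw [Nat.mod_eq_sub_mod (by omega)]; exact Nat.mod_eq_of_lt (by omega)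
        rw [hghigh m (by rw [h1]; omega), h1]
        have e := hper (m - N + 2)
        rw [show m - N + 2 + (N + 2) = m + 4 from by omega] at e
        exact e.symm
    · have hm : m = 2 * N := by omega
      subst hm
      have h1 : 2 * N % N = 0 := Nat.mul_mod_left 2 N
      rw [hglow (2 * N) (by rw [h1]; omega), h1]
      have e1 := hper (N + 2)
      rw [show (N + 2) + (N + 2) = 2 * N + 4 from by omega] at e1
      have e2 := hper 0
      rw [Nat.zero_add] at e2
      exact (e1.trans e2).symm
  have hadjg : ∀ m : ℕ, m + 1 ≤ N →
      H.Adj (f' ((m : ℕ) : ZMod N)) (f' ((m + 1 : ℕ) : ZMod N)) := by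
    intro m hm
    rcases Nat.lt_or_ge i' (m + 1) with hc | hc
    · rw [hB m (by omega) (by omega), hB (m + 1) (by omega) (by omega)]
      rw [show m + 1 + 2 = m + 2 + 1 from by omega]
      exact adj_nat H f hf (m + 2)
    · rw [hA m (by omega), hA (m + 1) (by omega)]
      exact adj_nat H f hf m
  have hf' : IsCycleHom H N f' := by
    intro j
    have hv := ZMod.val_lt j
    have hjv : ((j.val : ℕ) : ZMod N) = j := ZMod.natCast_rightInverse j
    have hj1 : ((j.val + 1 : ℕ) : ZMod N) = j + 1 := by
      rw [Nat.cast_add, Nat.cast_one, hjv]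
    have hadj := hadjg j.val (by omega)
    rw [hjv, hj1] at hadj
    exact hadj
  refine ⟨hf', ?_⟩
  rw [sig1_eq_steps (n := N) H f' hf', sig1_eq_steps (n := N + 2) H f hf]
  have hsp2 : f ((N + i' + 2 + 2 : ℕ) : ZMod (N + 2)) = f ((N + i' + 2 : ℕ) : ZMod (N + 2)) := by
    have e1 := hper i'
    rw [show i' + (N + 2) = N + i' + 2 from by omega] at e1
    have e2 := hper (i' + 2)
    rw [show i' + 2 + (N + 2) = N + i' + 2 + 2 from by omega] at e2
    rw [e1, e2]
    exact hspur'.symm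
  have pair1 : ((List.range 2).map
      (fun k => step H (fun m => f ((m : ℕ) : ZMod (N + 2))) (adj_nat H f hf) (i' + k))).prod
      = 1 := by
    simp only [List.range_succ, List.range_zero, List.nil_append, List.map_append,
      List.map_cons, List.map_nil, List.prod_append, List.prod_cons, List.prod_nil,
      mul_one, one_mul, Nat.add_zero]
    exact step_cancel H _ (adj_nat H f hf) i' hspur'.symm
  have pair2 : ((List.range 2).map
      (fun k => step H (fun m => f ((m : ℕ) : ZMod (N + 2))) (adj_nat H f hf)
        (i' + (2 + (N + k))))).prod = 1 := by
    simp only [List.range_succ, List.range_zero, List.nil_append, List.map_append,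
      List.map_cons, List.map_nil, List.prod_append, List.prod_cons, List.prod_nil,
      mul_one, one_mul, Nat.add_zero]
    rw [show i' + (2 + N) = N + i' + 2 from by omega,
      show i' + (2 + (N + 1)) = N + i' + 2 + 1 from by omega]
    exact step_cancel H _ (adj_nat H f hf) (N + i' + 2) hsp2
  rw [show (2 * N : ℕ) = i' + (N + (N - i')) from by omega]
  rw [prod_range_add', prod_range_add']
  rw [show (2 * (N + 2) : ℕ) = i' + (2 + (N + (2 + (N - i')))) from by omega]
  rw [prod_range_add', prod_range_add', prod_range_add', prod_range_add']
  rw [pair1, pair2, one_mul, one_mul]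
  refine congrArg₂ (· * ·) ?_ (congrArg₂ (· * ·) ?_ ?_)
  · refine congrArg List.prod (List.map_congr_left (fun k hk => ?_))
    rw [List.mem_range] at hk
    exact step_congr H _ _ _ _ k k (hA k (by omega)) (hA (k + 1) (by omega)) Iff.rfl
  · refine congrArg List.prod (List.map_congr_left (fun k hk => ?_))
    rw [List.mem_range] at hk
    refine step_congr H _ _ _ _ (i' + k) (i' + (2 + k)) ?_ ?_ ?_
    · exact (hB (i' + k) (by omega) (by omega)).trans
        (congrArg (fun m : ℕ => f ((m : ℕ) : ZMod (N + 2))) (by omega))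
    · exact (hB (i' + k + 1) (by omega) (by omega)).trans
        (congrArg (fun m : ℕ => f ((m : ℕ) : ZMod (N + 2))) (by omega))
    · rw [Nat.even_iff, Nat.even_iff]; omega
  · refine congrArg List.prod (List.map_congr_left (fun k hk => ?_))
    rw [List.mem_range] at hk
    refine step_congr H _ _ _ _ (i' + (N + k)) (i' + (2 + (N + (2 + k)))) ?_ ?_ ?_
    · exact (hC (i' + (N + k)) (by omega) (by omega)).trans
        (congrArg (fun m : ℕ => f ((m : ℕ) : ZMod (N + 2))) (by omega))
    · exact (hC (i' + (N + k) + 1) (by omega) (by omega)).trans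
        (congrArg (fun m : ℕ => f ((m : ℕ) : ZMod (N + 2))) (by omega))
    · rw [Nat.even_iff, Nat.even_iff]; omega
end

section
/- Let H be a finite connected simple graph. The following are equivalent: (a) there exist an odd n ≥ 3 and a graph homomorphism f : C_n → H with σ₂(f) = 0 in 𝒢₂(H); (b) there exists a map X : A(H) → ZMod 2 such that: for every vertex u of H, Σ_{v adjacent to u} (X(u,v) + X(v,u)) = 0; Σ_{(u,v) ∈ A(H)} X(u,v) = 1; and Σ_{(u,v) ∈ A(H)} (X(u,v) + X(v,u))·[(u,v)] = 0 in 𝒢₂(H), where [(u,v)] denotes the image of the basis vector (u,v) in 𝒢₂(H). -/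
/-- The free `ZMod 2`-vector space on the arcs of `H`. -/
abbrev ArcSpace {V : Type} (H : SimpleGraph V) := Arc H →₀ ZMod 2

/-- The relator vectors `(a,b)+(c,b)+(c,d)+(a,d)` over all 4-cycles `(a,b,c,d)` of `H`. -/
def relators2 {V : Type} (H : SimpleGraph V) : Set (ArcSpace H) :=
  {r | ∃ (a b c d : V) (hab : H.Adj a b) (hcb : H.Adj c b) (hcd : H.Adj c d) (had : H.Adj a d),
    r = Finsupp.single ⟨(a, b), hab⟩ 1 + Finsupp.single ⟨(c, b), hcb⟩ 1 +
        Finsupp.single ⟨(c, d), hcd⟩ 1 + Finsupp.single ⟨(a, d), had⟩ 1}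

/-- `𝒢₂(H)`: the quotient of the free `ZMod 2`-vector space on `A(H)` by the span of the
4-cycle relators. -/
abbrev G2 {V : Type} (H : SimpleGraph V) :=
  ArcSpace H ⧸ Submodule.span (ZMod 2) (relators2 H)

/-- The class of the basis vector corresponding to an arc, in `𝒢₂(H)`. -/
noncomputable def arcClass {V : Type} (H : SimpleGraph V) (a : Arc H) : G2 H :=
  Submodule.Quotient.mk (Finsupp.single a 1)

/-- The signature `σ₂(f) = Σ_{i=0}^{n-1} [(f(2i),f(2i+1)) + (f(2i+2),f(2i+1))] ∈ 𝒢₂(H)`. -/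
noncomputable def sig2 {V : Type} (H : SimpleGraph V) (n : ℕ) (f : ZMod n → V) (hf : IsCycleHom H n f) :
    G2 H :=
  ∑ k ∈ Finset.range n,
    (arcClass H ⟨(f (2 * (k : ZMod n)), f (2 * (k : ZMod n) + 1)), hf _⟩ +
     arcClass H ⟨(f (2 * (k : ZMod n) + 1 + 1), f (2 * (k : ZMod n) + 1)), (hf _).symm⟩)

noncomputable instance {V : Type} [Fintype V] (H : SimpleGraph V) : Fintype (Arc H) := by
  classical exact Subtype.fintype _

/-! ### Auxiliary material for the proof -/

section AuxHelpers
variable {V : Type} (H : SimpleGraph V)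

/-- Reversal of an arc. -/
def arcRev (a : Arc H) : Arc H := ⟨(a.val.2, a.val.1), a.prop.symm⟩

open Classical in
/-- `gp (u,v) = [(u,v)] + [(v,u)]` if `u,v` adjacent, else `0`. -/
noncomputable def gp (p : V × V) : G2 H :=
  if h : H.Adj p.1 p.2 then arcClass H ⟨p, h⟩ + arcClass H ⟨(p.2, p.1), h.symm⟩ else 0

lemma gp_adj {u v : V} (h : H.Adj u v) :
    gp H (u, v) = arcClass H ⟨(u, v), h⟩ + arcClass H ⟨(v, u), h.symm⟩ := by
  rw [gp, dif_pos h]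

lemma gp_swap (u v : V) : gp H (v, u) = gp H (u, v) := by
  by_cases h : H.Adj u v
  · rw [gp_adj H h, gp_adj H h.symm, add_comm]
  · have h' : ¬ H.Adj v u := fun hh => h hh.symm
    simp [gp, h, h']

lemma gp_arc (a : Arc H) : gp H a.val = arcClass H a + arcClass H (arcRev H a) := by
  obtain ⟨⟨u, v⟩, h⟩ := a
  exact gp_adj H h

lemma sum_range_zmod {M : Type*} [AddCommMonoid M] (n : ℕ) [NeZero n] (g : ZMod n → M) :
    ∑ k ∈ Finset.range n, g (k : ZMod n) = ∑ j : ZMod n, g j := by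
  refine Finset.sum_nbij' (fun k => (k : ZMod n)) (fun j => j.val) ?_ ?_ ?_ ?_ ?_
  · intro k hk; exact Finset.mem_univ _
  · intro j _; exact Finset.mem_range.mpr (ZMod.val_lt j)
  · intro k hk; exact ZMod.val_cast_of_lt (Finset.mem_range.mp hk)
  · intro j _; exact ZMod.natCast_rightInverse j
  · intro k hk; rfl

lemma two_unit {n : ℕ} (hodd : Odd n) : IsUnit (2 : ZMod n) := by
  have : ((2 : ℕ) : ZMod n) = (2 : ZMod n) := by push_cast; ring
  rw [← this, ZMod.isUnit_iff_coprime]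
  exact hodd.coprime_two_left

lemma sum_mul_two {M : Type*} [AddCommMonoid M] {n : ℕ} [NeZero n] (hodd : Odd n)
    (g : ZMod n → M) : ∑ j : ZMod n, g (2 * j) = ∑ j : ZMod n, g j := by
  obtain ⟨u, hu⟩ := two_unit hodd
  refine Finset.sum_nbij' (fun j => (u : ZMod n) * j)
    (fun j => ((u⁻¹ : (ZMod n)ˣ) : ZMod n) * j) ?_ ?_ ?_ ?_ ?_
  · intros; exact Finset.mem_univ _
  · intros; exact Finset.mem_univ _
  · intro j _; simp [← mul_assoc, ← Units.val_mul]
  · intro j _; simp [← mul_assoc, ← Units.val_mul]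
  · intro j _; rw [← hu]

lemma sum_add_one {M : Type*} [AddCommMonoid M] {n : ℕ} [NeZero n]
    (g : ZMod n → M) : ∑ j : ZMod n, g (j + 1) = ∑ j : ZMod n, g j := by
  refine Finset.sum_nbij' (fun j => j + 1) (fun j => j - 1) ?_ ?_ ?_ ?_ ?_
  · intros; exact Finset.mem_univ _
  · intros; exact Finset.mem_univ _
  · intro j _; ring
  · intro j _; ring
  · intro j _; rfl

lemma sig2_eq_sum {n : ℕ} [NeZero n] (hodd : Odd n) (f : ZMod n → V)
    (hf : IsCycleHom H n f) :
    sig2 H n f hf = ∑ j : ZMod n, gp H (f j, f (j + 1)) := by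
  rw [sig2]
  rw [sum_range_zmod n (fun j => arcClass H ⟨(f (2 * j), f (2 * j + 1)), hf _⟩ +
    arcClass H ⟨(f (2 * j + 1 + 1), f (2 * j + 1)), (hf _).symm⟩)]
  rw [Finset.sum_add_distrib]
  rw [sum_mul_two hodd (fun i => arcClass H ⟨(f i, f (i + 1)), hf i⟩)]
  rw [sum_mul_two hodd (fun i => arcClass H ⟨(f (i + 1 + 1), f (i + 1)), (hf (i+1)).symm⟩)]
  rw [sum_add_one (fun i => arcClass H ⟨(f (i + 1), f i), (hf i).symm⟩)]
  rw [← Finset.sum_add_distrib]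
  exact Finset.sum_congr rfl (fun i _ => (gp_adj H (hf i)).symm)

/-- The sum of `gp` over the darts of a walk. -/
noncomputable def tauW {u v : V} (w : H.Walk u v) : G2 H :=
  (w.darts.map (fun d => gp H d.toProd)).sum

lemma tauW_nil (u : V) : tauW H (SimpleGraph.Walk.nil : H.Walk u u) = 0 := rfl

lemma tauW_cons {u v w : V} (h : H.Adj u v) (p : H.Walk v w) :
    tauW H (SimpleGraph.Walk.cons h p) = gp H (u, v) + tauW H p := rfl

lemma tauW_append {u v w : V} (p : H.Walk u v) (q : H.Walk v w) :
    tauW H (p.append q) = tauW H p + tauW H q := by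
  rw [tauW, SimpleGraph.Walk.darts_append, List.map_append, List.sum_append]; rfl

lemma tauW_reverse {u v : V} (p : H.Walk u v) :
    tauW H p.reverse = tauW H p := by
  rw [tauW, SimpleGraph.Walk.darts_reverse, List.map_reverse, List.sum_reverse, List.map_map]
  congr 1
  apply List.map_congr_left
  intro d _
  show gp H d.symm.toProd = gp H d.toProd
  obtain ⟨⟨a, b⟩, hd⟩ := d
  exact gp_swap H a b

lemma tauW_getVert {u v : V} (w : H.Walk u v) :
    tauW H w = ∑ k ∈ Finset.range w.length, gp H (w.getVert k, w.getVert (k + 1)) := by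
  induction w with
  | nil => simp [tauW_nil]
  | cons h p ih =>
    rw [tauW_cons, ih, SimpleGraph.Walk.length_cons, Finset.sum_range_succ']
    simp only [SimpleGraph.Walk.getVert_cons_succ, SimpleGraph.Walk.getVert_zero]
    rw [add_comm]

lemma tauW_fold {b : V} (l : List (H.Walk b b)) :
    tauW H (l.foldr (fun p q => p.append q) SimpleGraph.Walk.nil) = (l.map (tauW H)).sum := by
  induction l with
  | nil => simp [tauW_nil]
  | cons w l ih => simp [List.foldr_cons, tauW_append, ih]

lemma lenW_fold {b : V} (l : List (H.Walk b b)) :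
    (l.foldr (fun p q => p.append q) SimpleGraph.Walk.nil).length
      = (l.map SimpleGraph.Walk.length).sum := by
  induction l with
  | nil => rfl
  | cons w l ih => simp [List.foldr_cons, SimpleGraph.Walk.length_append, ih]

lemma odd_iff_cast_two {m : ℕ} : (m : ZMod 2) = 1 ↔ Odd m := by
  constructor
  · intro h
    rw [Nat.odd_iff]
    rcases Nat.mod_two_eq_zero_or_one m with h2 | h2
    · exfalso
      have := ZMod.natCast_mod m 2
      rw [h2] at this
      rw [← this] at h
      norm_num at h
    · exact h2
  · rintro ⟨k, rfl⟩
    push_cast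
    rw [show ((2 : ZMod 2)) = 0 from rfl]
    ring

end AuxHelpers

section AuxHelpers2
variable {V : Type} [Fintype V] [DecidableEq V] (H : SimpleGraph V)


lemma sum_rev_reindex {M : Type*} [AddCommMonoid M] (F : Arc H → M) :
    ∑ a : Arc H, F (arcRev H a) = ∑ a : Arc H, F a := by
  refine Finset.sum_nbij' (arcRev H) (arcRev H) ?_ ?_ ?_ ?_ ?_ <;>
    intros <;> first | exact Finset.mem_univ _ | rfl

lemma sum_X_filter {M : Type*} [AddCommMonoid M] [Module (ZMod 2) M]
    (X : Arc H → ZMod 2) (t : Arc H → M) :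
    ∑ a ∈ Finset.univ.filter (fun a => X a = 1), t a = ∑ a : Arc H, X a • t a := by
  rw [Finset.sum_filter]
  refine Finset.sum_congr rfl fun a _ => ?_
  rcases (show ∀ x : ZMod 2, x = 0 ∨ x = 1 by decide) (X a) with h | h <;> simp [h]

lemma pair_vanish {M : Type*} [AddCommMonoid M] [Module (ZMod 2) M]
    (X : Arc H → ZMod 2)
    (flow : ∀ u : V, (∑ a : Arc H, if a.val.1 = u then X a + X (arcRev H a) else 0) = 0)
    (t : V → M) :
    ∑ a : Arc H, (X a + X (arcRev H a)) • t a.val.1 = 0 := by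
  have step1 : ∀ a : Arc H, (X a + X (arcRev H a)) • t a.val.1
      = ∑ u : V, (if a.val.1 = u then X a + X (arcRev H a) else 0) • t u := by
    intro a
    have : ∀ u : V, (if a.val.1 = u then X a + X (arcRev H a) else 0) • t u
        = if a.val.1 = u then (X a + X (arcRev H a)) • t u else 0 := by
      intro u; split <;> simp
    rw [Finset.sum_congr rfl (fun u _ => this u)]
    rw [Finset.sum_ite_eq Finset.univ a.val.1 (fun u => (X a + X (arcRev H a)) • t u)]
    simp
  rw [Finset.sum_congr rfl (fun a _ => step1 a), Finset.sum_comm]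
  refine Finset.sum_eq_zero fun u _ => ?_
  rw [← Finset.sum_smul, flow u, zero_smul]

lemma sum_X_step {M : Type*} [AddCommMonoid M] [Module (ZMod 2) M] {n : ℕ} [NeZero n]
    (step : ZMod n → Arc H) (t : Arc H → M) :
    ∑ a : Arc H, (∑ j : ZMod n, if step j = a then (1 : ZMod 2) else 0) • t a
      = ∑ j : ZMod n, t (step j) := by
  have step1 : ∀ a : Arc H, (∑ j : ZMod n, if step j = a then (1 : ZMod 2) else 0) • t a
      = ∑ j : ZMod n, if step j = a then t a else 0 := by
    intro a
    rw [Finset.sum_smul]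
    refine Finset.sum_congr rfl fun j _ => ?_
    split <;> simp
  rw [Finset.sum_congr rfl (fun a _ => step1 a), Finset.sum_comm]
  refine Finset.sum_congr rfl fun j _ => ?_
  rw [Finset.sum_ite_eq Finset.univ (step j) (fun a => t a)]
  simp

end AuxHelpers2

section AuxHelpers3
variable {V : Type} [Fintype V] [DecidableEq V] (H : SimpleGraph V)

lemma pair_filter_vanish {M : Type*} [AddCommMonoid M] [Module (ZMod 2) M]
    (X : Arc H → ZMod 2)
    (flow : ∀ u : V, (∑ a : Arc H, if a.val.1 = u then X a + X (arcRev H a) else 0) = 0)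
    (t : V → M) :
    ∑ a ∈ Finset.univ.filter (fun a => X a = 1), (t a.val.1 + t a.val.2) = 0 := by
  rw [sum_X_filter H X (fun a => t a.val.1 + t a.val.2)]
  rw [Finset.sum_congr rfl (fun (a : Arc H) _ =>
    smul_add (X a) (t a.val.1) (t a.val.2)), Finset.sum_add_distrib]
  have h2 : ∑ a : Arc H, X a • t a.val.2 = ∑ a : Arc H, X (arcRev H a) • t a.val.1 := by
    rw [← sum_rev_reindex H (fun a => X (arcRev H a) • t a.val.1)]
    exact Finset.sum_congr rfl (fun a _ => rfl)
  rw [h2, ← Finset.sum_add_distrib]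
  rw [Finset.sum_congr rfl (fun (a : Arc H) _ =>
    (add_smul (X a) (X (arcRev H a)) (t a.val.1)).symm)]
  exact pair_vanish H X flow t

end AuxHelpers3

/-- For a finite connected simple graph `H`, the existence of an odd cycle with
`σ₂ = 0` is equivalent to the solvability of the flow/parity/signature system over `ZMod 2`. -/
theorem odd_cycle_trivial_sig2_iff_system_solvable {V : Type} [Fintype V] [DecidableEq V]
    (H : SimpleGraph V) (hconn : H.Connected) :
    (∃ n : ℕ, Odd n ∧ 3 ≤ n ∧ ∃ (f : ZMod n → V) (hf : IsCycleHom H n f), sig2 H n f hf = 0)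
      ↔
    (∃ X : Arc H → ZMod 2,
      -- flow constraint at every vertex `u`: Σ_{v ∈ N(u)} (X(u,v) + X(v,u)) = 0
      (∀ u : V,
        (∑ a : Arc H, if a.val.1 = u then X a + X ⟨(a.val.2, a.val.1), a.prop.symm⟩ else 0)
          = 0) ∧
      -- parity constraint: Σ_{(u,v) ∈ A(H)} X(u,v) = 1
      (∑ a : Arc H, X a) = 1 ∧
      -- signature constraint: Σ_{(u,v) ∈ A(H)} (X(u,v) - X(v,u)) · [(u,v)] = 0 in 𝒢₂(H)
      (∑ a : Arc H, (X a - X ⟨(a.val.2, a.val.1), a.prop.symm⟩) • arcClass H a) = 0) := by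
  have sub_eq_add : ∀ x y : ZMod 2, x - y = x + y := by decide
  constructor
  · -- forward direction
    rintro ⟨n, hodd, h3, f, hf, hsig⟩
    haveI : NeZero n := ⟨by omega⟩
    set step : ZMod n → Arc H := fun j => ⟨(f j, f (j + 1)), hf j⟩ with hstep
    set X : Arc H → ZMod 2 := fun a => ∑ j : ZMod n, if step j = a then (1 : ZMod 2) else 0
      with hX
    have hXrev : ∀ a : Arc H, X (arcRev H a)
        = ∑ j : ZMod n, if arcRev H (step j) = a then (1 : ZMod 2) else 0 := by
      intro a
      refine Finset.sum_congr rfl fun j _ => if_congr ?_ rfl rfl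
      constructor
      · intro h; rw [h]; rfl
      · intro h; rw [← h]; rfl
    refine ⟨X, ?_, ?_, ?_⟩
    · -- flow constraint
      intro u
      have expand : ∀ a : Arc H,
          (if a.val.1 = u then X a + X (arcRev H a) else 0)
            = X a • (if a.val.1 = u then (1 : ZMod 2) else 0)
              + X (arcRev H a) • (if a.val.1 = u then (1 : ZMod 2) else 0) := by
        intro a; split <;> simp [smul_eq_mul]
      show (∑ a : Arc H, if a.val.1 = u then X a + X (arcRev H a) else 0) = 0
      rw [Finset.sum_congr rfl (fun a _ => expand a), Finset.sum_add_distrib]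
      have e1 : ∑ a : Arc H, X a • (if a.val.1 = u then (1 : ZMod 2) else 0)
          = ∑ j : ZMod n, (if f j = u then (1 : ZMod 2) else 0) := by
        rw [hX]
        exact sum_X_step H step (fun a => if a.val.1 = u then (1 : ZMod 2) else 0)
      have e2 : ∑ a : Arc H, X (arcRev H a) • (if a.val.1 = u then (1 : ZMod 2) else 0)
          = ∑ j : ZMod n, (if f (j + 1) = u then (1 : ZMod 2) else 0) := by
        rw [Finset.sum_congr rfl
          (fun (a : Arc H) _ => by rw [hXrev a] :
            ∀ a ∈ Finset.univ, X (arcRev H a) • (if a.val.1 = u then (1 : ZMod 2) else 0)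
              = (∑ j : ZMod n, if arcRev H (step j) = a then (1 : ZMod 2) else 0)
                  • (if a.val.1 = u then (1 : ZMod 2) else 0))]
        exact sum_X_step H (fun j => arcRev H (step j))
          (fun a => if a.val.1 = u then (1 : ZMod 2) else 0)
      rw [e1, e2, sum_add_one (fun j => if f j = u then (1 : ZMod 2) else 0)]
      rw [← two_smul (ZMod 2) (∑ j : ZMod n, if f j = u then (1 : ZMod 2) else 0)]
      rw [show ((2 : ZMod 2)) = 0 from rfl, zero_smul]
    · -- parity constraint
      have h1 := sum_X_step H step (fun _ => (1 : ZMod 2))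
      have h2 : ∀ a : Arc H,
          (∑ j : ZMod n, if step j = a then (1 : ZMod 2) else 0) • (1 : ZMod 2) = X a := by
        intro a; rw [smul_eq_mul, mul_one]
      rw [Finset.sum_congr rfl (fun a _ => h2 a)] at h1
      rw [h1, Finset.sum_const, Finset.card_univ, ZMod.card]
      rw [nsmul_eq_mul, mul_one, odd_iff_cast_two]
      exact hodd
    · -- signature constraint
      show (∑ a : Arc H, (X a - X (arcRev H a)) • arcClass H a) = 0
      have expand : ∀ a : Arc H, (X a - X (arcRev H a)) • arcClass H a
          = X a • arcClass H a + X (arcRev H a) • arcClass H a := by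
        intro a; rw [sub_eq_add, add_smul]
      rw [Finset.sum_congr rfl (fun a _ => expand a), Finset.sum_add_distrib]
      have e1 : ∑ a : Arc H, X a • arcClass H a = ∑ j : ZMod n, arcClass H (step j) := by
        rw [hX]; exact sum_X_step H step (arcClass H)
      have e2 : ∑ a : Arc H, X (arcRev H a) • arcClass H a
          = ∑ j : ZMod n, arcClass H (arcRev H (step j)) := by
        rw [Finset.sum_congr rfl
          (fun (a : Arc H) _ => by rw [hXrev a] :
            ∀ a ∈ Finset.univ, X (arcRev H a) • arcClass H a
              = (∑ j : ZMod n, if arcRev H (step j) = a then (1 : ZMod 2) else 0)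
                  • arcClass H a)]
        exact sum_X_step H (fun j => arcRev H (step j)) (arcClass H)
      rw [e1, e2, ← Finset.sum_add_distrib]
      rw [Finset.sum_congr rfl (fun (j : ZMod n) _ => (gp_arc H (step j)).symm)]
      rw [← sig2_eq_sum H hodd f hf]
      exact hsig
  · -- backward direction
    rintro ⟨X, flow, parity, hsig⟩
    have flow' : ∀ u : V,
        (∑ a : Arc H, if a.val.1 = u then X a + X (arcRev H a) else 0) = 0 := flow
    haveI : Nonempty V := hconn.nonempty
    obtain ⟨b⟩ := hconn.nonempty
    set p : ∀ x : V, H.Walk b x := fun x => (hconn.preconnected b x).some with hp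
    set S : Finset (Arc H) := Finset.univ.filter (fun a => X a = 1) with hS
    set seg : Arc H → H.Walk b b := fun a =>
      (p a.val.1).append (SimpleGraph.Walk.cons a.prop (p a.val.2).reverse) with hseg
    set W : H.Walk b b :=
      (S.toList.map seg).foldr (fun q r => q.append r) SimpleGraph.Walk.nil with hW
    have tau_seg : ∀ a : Arc H, tauW H (seg a)
        = gp H a.val + (tauW H (p a.val.1) + tauW H (p a.val.2)) := by
      intro a
      show tauW H ((p a.val.1).append (SimpleGraph.Walk.cons a.prop (p a.val.2).reverse)) = _
      rw [tauW_append, tauW_cons, tauW_reverse]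
      have h1 : gp H (a.val.1, a.val.2) = gp H a.val := rfl
      rw [h1]
      abel
    have len_seg : ∀ a : Arc H, (seg a).length
        = (p a.val.1).length + ((p a.val.2).length + 1) := by
      intro a
      show ((p a.val.1).append (SimpleGraph.Walk.cons a.prop (p a.val.2).reverse)).length = _
      rw [SimpleGraph.Walk.length_append, SimpleGraph.Walk.length_cons,
        SimpleGraph.Walk.length_reverse]
    -- the signature hypothesis in `arcRev` form
    have hsig' : ∑ a : Arc H, (X a + X (arcRev H a)) • arcClass H a = 0 := by
      rw [← hsig]
      exact Finset.sum_congr rfl (fun a _ => by rw [sub_eq_add]; rfl)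
    -- τ(W) = 0
    have tauWzero : tauW H W = 0 := by
      rw [hW, tauW_fold, List.map_map]
      have h1 : (S.toList.map (tauW H ∘ seg)).sum = ∑ a ∈ S, tauW H (seg a) :=
        Finset.sum_map_toList S (tauW H ∘ seg)
      rw [h1, Finset.sum_congr rfl (fun a _ => tau_seg a), Finset.sum_add_distrib]
      have h2 : ∑ a ∈ S, (tauW H (p a.val.1) + tauW H (p a.val.2)) = 0 :=
        pair_filter_vanish H X flow' (fun u => tauW H (p u))
      rw [h2, add_zero, hS]
      rw [sum_X_filter H X (fun a => gp H a.val)]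
      rw [Finset.sum_congr rfl (fun (a : Arc H) _ => by rw [gp_arc H a, smul_add])]
      rw [Finset.sum_add_distrib]
      have h3 : ∑ a : Arc H, X a • arcClass H (arcRev H a)
          = ∑ a : Arc H, X (arcRev H a) • arcClass H a := by
        rw [← sum_rev_reindex H (fun a => X (arcRev H a) • arcClass H a)]
        exact Finset.sum_congr rfl (fun a _ => rfl)
      rw [h3, ← Finset.sum_add_distrib]
      rw [Finset.sum_congr rfl (fun (a : Arc H) _ =>
        (add_smul (X a) (X (arcRev H a)) (arcClass H a)).symm)]
      exact hsig'
    -- |W| is odd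
    have lenWcast : ((W.length : ZMod 2)) = 1 := by
      rw [hW, lenW_fold, List.map_map]
      have h1 : (S.toList.map (SimpleGraph.Walk.length ∘ seg)).sum
          = ∑ a ∈ S, (seg a).length :=
        Finset.sum_map_toList S (SimpleGraph.Walk.length ∘ seg)
      rw [h1, Nat.cast_sum]
      have h2 : ∀ a : Arc H, (((seg a).length : ZMod 2))
          = (((p a.val.1).length : ZMod 2) + ((p a.val.2).length : ZMod 2)) + 1 := by
        intro a; rw [len_seg a]; push_cast; ring
      rw [Finset.sum_congr rfl (fun a _ => h2 a), Finset.sum_add_distrib]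
      have h3 : ∑ a ∈ S, (((p a.val.1).length : ZMod 2) + ((p a.val.2).length : ZMod 2)) = 0 :=
        pair_filter_vanish H X flow' (fun u => ((p u).length : ZMod 2))
      rw [h3, zero_add, hS]
      have h4 : ∑ a ∈ Finset.univ.filter (fun a => X a = 1), (1 : ZMod 2)
          = ∑ a : Arc H, X a • (1 : ZMod 2) := sum_X_filter H X (fun _ => (1 : ZMod 2))
      rw [h4, Finset.sum_congr rfl
        (fun (a : Arc H) _ => by rw [smul_eq_mul, mul_one] :
          ∀ a ∈ Finset.univ, X a • (1 : ZMod 2) = X a)]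
      exact parity
    have hoddn : Odd W.length := odd_iff_cast_two.mp lenWcast
    set n := W.length with hn
    haveI : NeZero n := ⟨by rcases hoddn with ⟨k, hk⟩; omega⟩
    set f : ZMod n → V := fun i => W.getVert i.val with hfdef
    have hfv : ∀ k : ℕ, k < n → f ((k : ZMod n) + 1) = W.getVert (k + 1) := by
      intro k hk
      have hcast : ((k : ZMod n) + 1) = ((k + 1 : ℕ) : ZMod n) := by push_cast; ring
      rw [hcast]
      by_cases h : k + 1 < n
      · show W.getVert (((k + 1 : ℕ) : ZMod n)).val = _
        rw [ZMod.val_cast_of_lt h]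
      · have hk1 : k + 1 = n := by omega
        rw [hk1]
        show W.getVert (((n : ℕ) : ZMod n)).val = W.getVert n
        rw [ZMod.natCast_self, ZMod.val_zero, SimpleGraph.Walk.getVert_zero]
        exact (SimpleGraph.Walk.getVert_length W).symm
    have hf : IsCycleHom H n f := by
      intro i
      have hi : i.val < n := ZMod.val_lt i
      have h2 : f (i + 1) = W.getVert (i.val + 1) := by
        have hi2 : ((i.val : ℕ) : ZMod n) = i := ZMod.natCast_rightInverse i
        have h4 := hfv i.val hi
        rwa [hi2] at h4
      rw [h2]
      exact W.adj_getVert_succ hi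
    have hne1 : n ≠ 1 := by
      intro h1
      have hadj := W.adj_getVert_succ (i := 0) (by omega)
      rw [SimpleGraph.Walk.getVert_zero] at hadj
      have h2 : W.getVert (0 + 1) = b := by
        have h3 : (0 + 1 : ℕ) = W.length := by omega
        rw [h3, SimpleGraph.Walk.getVert_length]
      rw [h2] at hadj
      exact H.irrefl hadj
    have h3n : 3 ≤ n := by
      have := Nat.odd_iff.mp hoddn
      omega
    refine ⟨n, hoddn, h3n, f, hf, ?_⟩
    rw [sig2_eq_sum H hoddn f hf]
    rw [← sum_range_zmod n (fun j => gp H (f j, f (j + 1)))]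
    have hstepeq : ∀ k ∈ Finset.range n,
        gp H (f (k : ZMod n), f ((k : ZMod n) + 1)) = gp H (W.getVert k, W.getVert (k + 1)) := by
      intro k hk
      have hk' : k < n := Finset.mem_range.mp hk
      have e1 : f (k : ZMod n) = W.getVert k := by
        show W.getVert (((k : ℕ) : ZMod n)).val = _
        rw [ZMod.val_cast_of_lt hk']
      rw [e1, hfv k hk']
    rw [Finset.sum_congr rfl hstepeq]
    rw [← tauW_getVert]
    exact tauWzero
end
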